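/- Let m ≥ 2, K ∈ ℝ^{m×m}, a > 0, η ∈ ℝ^m with η_i > −1 for all i, fix j ∈ {1,…,m−1} and α > max{0, 1−η_j, 1−η_m}. For x ∈ Δ_{−m}° write x_m := 1 − Σ_{i=1}^{m−1} x_i and define the profiled score for the case b = 0: s_j(x) = −(κ_{·,j}^⊤ x^a) x_j^{a−1} + (κ_{·,m}^⊤ x^a) x_m^{a−1} + η_j / x_j − η_m / x_m. Then ∫_{Δ_{−m}°} (Π_{k=1}^m x_k^{η_k}) · min{x_j, x_m}^α · s_j(x)² dx < ∞. -/
import Mathlib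


open MeasureTheory Matrix Finset

/-- The open simplex `Δ_{-m}°` in `ℝ^n` (where `m = n+1`). -/
def simplexInt (n : ℕ) : Set (Fin n → ℝ) :=
  {x | (∀ i, 0 < x i) ∧ ∑ i, x i < 1}

/-- Profile the last coordinate: send `x ∈ ℝ^n` to `(x, 1 - ∑ x) ∈ ℝ^{n+1}`. -/
noncomputable def fullVec {n : ℕ} (x : Fin n → ℝ) : Fin (n + 1) → ℝ :=
  Fin.snoc x (1 - ∑ i, x i)

section Aux

variable {n : ℕ}

lemma fullVec_castSucc (x : Fin n → ℝ) (i : Fin n) : fullVec x i.castSucc = x i := by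
  simp [fullVec]

lemma fullVec_last (x : Fin n → ℝ) : fullVec x (Fin.last n) = 1 - ∑ i, x i := by
  simp [fullVec]

lemma measurable_fullVec (k : Fin (n + 1)) :
    Measurable fun x : Fin n → ℝ => fullVec x k := by
  induction k using Fin.lastCases with
  | last =>
      simp only [fullVec_last]
      exact measurable_const.sub (Finset.measurable_sum _ fun i _ => measurable_pi_apply i)
  | cast i =>
      simp only [fullVec_castSucc]
      exact measurable_pi_apply i

lemma fullVec_pos {x : Fin n → ℝ} (hx : x ∈ simplexInt n) (k : Fin (n + 1)) :
    0 < fullVec x k := by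
  induction k using Fin.lastCases with
  | last => rw [fullVec_last]; linarith [hx.2]
  | cast i => rw [fullVec_castSucc]; exact hx.1 i

lemma fullVec_le_one {x : Fin n → ℝ} (hx : x ∈ simplexInt n) (k : Fin (n + 1)) :
    fullVec x k ≤ 1 := by
  induction k using Fin.lastCases with
  | last =>
      rw [fullVec_last]
      have h0 : (0:ℝ) ≤ ∑ i, x i := Finset.sum_nonneg fun i _ => (hx.1 i).le
      linarith
  | cast i =>
      rw [fullVec_castSucc]
      calc x i ≤ ∑ i, x i :=
            Finset.single_le_sum (fun i _ => (hx.1 i).le) (Finset.mem_univ i)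
        _ ≤ 1 := hx.2.le

lemma sum_fullVec (x : Fin n → ℝ) : ∑ k, fullVec x k = 1 := by
  rw [Fin.sum_univ_castSucc]
  simp [fullVec_castSucc, fullVec_last]

lemma measurableSet_simplexInt : MeasurableSet (simplexInt n) := by
  have h1 : simplexInt n
      = (⋂ i, {x : Fin n → ℝ | 0 < x i}) ∩ {x : Fin n → ℝ | ∑ i, x i < 1} := by
    ext x; simp [simplexInt, Set.mem_iInter]
  rw [h1]
  exact (MeasurableSet.iInter fun i =>
      measurableSet_lt measurable_const (measurable_pi_apply i)).inter
    (measurableSet_lt (Finset.measurable_sum _ fun i _ => measurable_pi_apply i)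
      measurable_const)

lemma prod_rpow_update {N : ℕ} (v : Fin N → ℝ) (hv : ∀ k, 0 < v k)
    (η : Fin N → ℝ) (i : Fin N) (b : ℝ) :
    ∏ k, v k ^ (Function.update η i (η i + b) k) = (∏ k, v k ^ η k) * v i ^ b := by
  have h : ∀ k ∈ Finset.univ.erase i,
      v k ^ (Function.update η i (η i + b) k) = v k ^ η k := fun k hk => by
    rw [Function.update_of_ne (Finset.ne_of_mem_erase hk)]
  rw [← Finset.prod_erase_mul _ _ (Finset.mem_univ i),
    ← Finset.prod_erase_mul _ _ (Finset.mem_univ i),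
    Finset.prod_congr rfl h, Function.update_self, Real.rpow_add (hv i)]
  ring

lemma integrable_indicator_rpow {p : ℝ} (hp : -1 < p) :
    Integrable ((Set.Ioo (0:ℝ) 1).indicator fun t => t ^ p) := by
  have h : IntegrableOn (fun t : ℝ => t ^ p) (Set.Ioo 0 1) := by
    have h2 := intervalIntegral.intervalIntegrable_rpow' (a := 0) (b := 1) hp
    rw [intervalIntegrable_iff_integrableOn_Ioc_of_le zero_le_one] at h2
    exact h2.mono_set Set.Ioo_subset_Ioc_self
  exact h.integrable_indicator measurableSet_Ioo

lemma integrableOn_prod_rpow_last (η : Fin (n + 1) → ℝ) (hη : ∀ i, -1 < η i)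
    {ε : ℝ} (hε : 0 < ε) :
    IntegrableOn (fun x : Fin n → ℝ => ∏ k, fullVec x k ^ η k)
      (simplexInt n ∩ {x | ε ≤ fullVec x (Fin.last n)}) := by
  set C : ℝ := ε ^ η (Fin.last n) + 1 with hC
  have hg0 : Integrable (fun x : Fin n → ℝ =>
      ∏ i, (Set.Ioo (0:ℝ) 1).indicator (fun t => t ^ η i.castSucc) (x i)) :=
    Integrable.fintype_prod (𝕜 := ℝ) fun i => integrable_indicator_rpow (hη i.castSucc)
  have hg : Integrable (fun x : Fin n → ℝ =>
      C * ∏ i, (Set.Ioo (0:ℝ) 1).indicator (fun t => t ^ η i.castSucc) (x i)) :=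
    hg0.const_mul C
  refine Integrable.mono' hg.integrableOn ?_ ?_
  · exact (Finset.measurable_prod _ fun k _ =>
      (measurable_fullVec k).pow measurable_const).aestronglyMeasurable
  · rw [ae_restrict_iff' (measurableSet_simplexInt.inter
      (measurableSet_le measurable_const (measurable_fullVec _)))]
    refine MeasureTheory.ae_of_all _ fun x hx => ?_
    obtain ⟨hxs, hxε⟩ := hx
    have hpos : ∀ k, 0 < fullVec x k := fun k => fullVec_pos hxs k
    have hprod_nonneg : (0:ℝ) ≤ ∏ k, fullVec x k ^ η k :=
      Finset.prod_nonneg fun k _ => (Real.rpow_pos_of_pos (hpos k) _).le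
    rw [Real.norm_eq_abs, abs_of_nonneg hprod_nonneg]
    have hsplit : ∏ k, fullVec x k ^ η k
        = (∏ i : Fin n, x i ^ η i.castSucc) * fullVec x (Fin.last n) ^ η (Fin.last n) := by
      rw [Fin.prod_univ_castSucc]
      simp [fullVec_castSucc]
    have hind : ∀ i : Fin n, (Set.Ioo (0:ℝ) 1).indicator
        (fun t => t ^ η i.castSucc) (x i) = x i ^ η i.castSucc := by
      intro i
      have hmem : x i ∈ Set.Ioo (0:ℝ) 1 :=
        ⟨hxs.1 i, lt_of_le_of_lt
          (Finset.single_le_sum (fun i _ => (hxs.1 i).le) (Finset.mem_univ i)) hxs.2⟩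
      exact Set.indicator_of_mem hmem _
    have hlastC : fullVec x (Fin.last n) ^ η (Fin.last n) ≤ C := by
      rcases le_or_gt 0 (η (Fin.last n)) with hp | hp
      · have h1 : fullVec x (Fin.last n) ^ η (Fin.last n) ≤ 1 :=
          Real.rpow_le_one (hpos _).le (fullVec_le_one hxs _) hp
        have h2 : (0:ℝ) ≤ ε ^ η (Fin.last n) := (Real.rpow_pos_of_pos hε _).le
        rw [hC]; linarith
      · have h1 : fullVec x (Fin.last n) ^ η (Fin.last n) ≤ ε ^ η (Fin.last n) :=
          Real.rpow_le_rpow_of_nonpos hε hxε hp.le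
        rw [hC]; linarith
    have hq : (0:ℝ) ≤ ∏ i : Fin n, x i ^ η i.castSucc :=
      Finset.prod_nonneg fun i _ => (Real.rpow_pos_of_pos (hxs.1 i) _).le
    calc ∏ k, fullVec x k ^ η k
        = (∏ i : Fin n, x i ^ η i.castSucc) * fullVec x (Fin.last n) ^ η (Fin.last n) :=
          hsplit
      _ ≤ (∏ i : Fin n, x i ^ η i.castSucc) * C := by
          exact mul_le_mul_of_nonneg_left hlastC hq
      _ = C * ∏ i, (Set.Ioo (0:ℝ) 1).indicator (fun t => t ^ η i.castSucc) (x i) := by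
          rw [Finset.prod_congr rfl fun i _ => hind i]; ring

/-- Reflection of the `j`-th coordinate through the profiled coordinate. -/
noncomputable def reflect {m : ℕ} (j : Fin (m + 1)) (x : Fin (m + 1) → ℝ) :
    Fin (m + 1) → ℝ :=
  Function.update x j (1 - ∑ i, x i)

lemma sum_reflect {m : ℕ} (j : Fin (m + 1)) (x : Fin (m + 1) → ℝ) :
    ∑ i, reflect j x i = 1 - x j := by
  rw [reflect, Finset.sum_update_of_mem (Finset.mem_univ j),
    Finset.sum_sdiff_eq_sub (Finset.subset_univ {j}), Finset.sum_singleton]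
  ring

lemma reflect_apply_self {m : ℕ} (j : Fin (m + 1)) (x : Fin (m + 1) → ℝ) :
    reflect j x j = 1 - ∑ i, x i := by
  rw [reflect, Function.update_self]

lemma reflect_apply_ne {m : ℕ} (j : Fin (m + 1)) (x : Fin (m + 1) → ℝ) {i : Fin (m + 1)}
    (hij : i ≠ j) : reflect j x i = x i := by
  rw [reflect, Function.update_of_ne hij]

lemma reflect_involutive {m : ℕ} (j : Fin (m + 1)) :
    Function.Involutive (reflect j) := by
  intro x
  funext i
  rcases eq_or_ne i j with rfl | hij
  · rw [reflect_apply_self, sum_reflect]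
    ring
  · rw [reflect_apply_ne j _ hij, reflect_apply_ne j _ hij]

lemma measurable_reflect {m : ℕ} (j : Fin (m + 1)) : Measurable (reflect j) := by
  rw [measurable_pi_iff]
  intro i
  rcases eq_or_ne i j with rfl | hij
  · simp only [reflect_apply_self]
    exact measurable_const.sub (Finset.measurable_sum _ fun i _ => measurable_pi_apply i)
  · simp only [reflect_apply_ne j _ hij]
    exact measurable_pi_apply i

/-- `reflect j` as a measurable equivalence. -/
noncomputable def reflectEquiv {m : ℕ} (j : Fin (m + 1)) :
    (Fin (m + 1) → ℝ) ≃ᵐ (Fin (m + 1) → ℝ) where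
  toEquiv := (reflect_involutive j).toPerm _
  measurable_toFun := measurable_reflect j
  measurable_invFun := measurable_reflect j

lemma reflectEquiv_coe {m : ℕ} (j : Fin (m + 1)) : ⇑(reflectEquiv j) = reflect j := rfl

lemma measurePreserving_reflect {m : ℕ} (j : Fin (m + 1)) :
    MeasurePreserving (reflect j) (volume : Measure (Fin (m + 1) → ℝ)) volume := by
  have hS' : MeasurePreserving
      (fun p : (Fin m → ℝ) × ℝ => (p.1, (1 - ∑ i, p.1 i) - p.2))
      ((volume : Measure (Fin m → ℝ)).prod (volume : Measure ℝ))
      ((volume : Measure (Fin m → ℝ)).prod (volume : Measure ℝ)) := by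
    refine MeasurePreserving.skew_product
      (g := fun (y : Fin m → ℝ) (t : ℝ) => (1 - ∑ i, y i) - t)
      (μc := (volume : Measure ℝ)) (μd := (volume : Measure ℝ))
      (MeasurePreserving.id (volume : Measure (Fin m → ℝ))) ?_
      (MeasureTheory.ae_of_all _ fun y => ?_)
    · exact (measurable_const.sub (Finset.measurable_sum _ fun i _ =>
        (measurable_pi_apply i).comp measurable_fst)).sub measurable_snd
    · exact Measure.map_sub_left_eq_self volume _
  have hS : MeasurePreserving
      (fun p : ℝ × (Fin m → ℝ) => ((1 - ∑ i, p.2 i) - p.1, p.2))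
      ((volume : Measure ℝ).prod (volume : Measure (Fin m → ℝ)))
      ((volume : Measure ℝ).prod (volume : Measure (Fin m → ℝ))) := by
    have h := ((Measure.measurePreserving_swap (μ := (volume : Measure (Fin m → ℝ)))
        (ν := (volume : Measure ℝ))).comp hS').comp
      (Measure.measurePreserving_swap (μ := (volume : Measure ℝ))
        (ν := (volume : Measure (Fin m → ℝ))))
    have heq : (fun p : ℝ × (Fin m → ℝ) => ((1 - ∑ i, p.2 i) - p.1, p.2))
        = (Prod.swap ∘ fun p : (Fin m → ℝ) × ℝ => (p.1, (1 - ∑ i, p.1 i) - p.2))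
          ∘ Prod.swap := by
      funext p; rfl
    rw [heq]
    exact h
  have he := volume_preserving_piFinSuccAbove (fun _ : Fin (m + 1) => ℝ) j
  have heq : reflect j = (MeasurableEquiv.piFinSuccAbove (fun _ : Fin (m + 1) => ℝ) j).symm
      ∘ (fun p : ℝ × (Fin m → ℝ) => ((1 - ∑ i, p.2 i) - p.1, p.2))
      ∘ (MeasurableEquiv.piFinSuccAbove (fun _ : Fin (m + 1) => ℝ) j) := by
    funext x
    simp only [Function.comp_apply, MeasurableEquiv.piFinSuccAbove_apply,
      MeasurableEquiv.piFinSuccAbove_symm_apply, Fin.insertNthEquiv_apply,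
      Fin.insertNthEquiv_symm_apply]
    have hkey : ((1:ℝ) - ∑ i : Fin m, j.removeNth x i) - x j = 1 - ∑ i, x i := by
      simp only [Fin.removeNth]
      rw [Fin.sum_univ_succAbove (fun i => x i) j]
      ring
    rw [hkey]
    show reflect j x = j.insertNth (1 - ∑ i, x i) (j.removeNth x)
    rw [Fin.insertNth_removeNth]
    rfl
  rw [heq]
  have hS2 : MeasurePreserving
      (fun p : ℝ × (Fin m → ℝ) => ((1 - ∑ i, p.2 i) - p.1, p.2))
      (volume : Measure (ℝ × (Fin m → ℝ))) volume := by
    rw [Measure.volume_eq_prod]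
    exact hS
  exact (he.symm _).comp (hS2.comp he)

lemma fullVec_reflect {m : ℕ} (j : Fin (m + 1)) (x : Fin (m + 1) → ℝ)
    (k : Fin (m + 2)) :
    fullVec (reflect j x) k
      = fullVec x (Equiv.swap j.castSucc (Fin.last (m + 1)) k) := by
  induction k using Fin.lastCases with
  | last =>
      rw [Equiv.swap_apply_right, fullVec_last, fullVec_castSucc, sum_reflect]
      ring
  | cast i =>
      rcases eq_or_ne i j with rfl | hij
      · rw [Equiv.swap_apply_left, fullVec_castSucc, fullVec_last,
          reflect_apply_self]
      · rw [Equiv.swap_apply_of_ne_of_ne (by simpa using hij)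
          (Fin.castSucc_lt_last i).ne, fullVec_castSucc, fullVec_castSucc,
          reflect_apply_ne j _ hij]

lemma reflect_mem_simplexInt {m : ℕ} (j : Fin (m + 1)) {x : Fin (m + 1) → ℝ}
    (hx : x ∈ simplexInt (m + 1)) : reflect j x ∈ simplexInt (m + 1) := by
  constructor
  · intro i
    rcases eq_or_ne i j with rfl | hij
    · rw [reflect_apply_self]; linarith [hx.2]
    · rw [reflect_apply_ne j _ hij]; exact hx.1 i
  · rw [sum_reflect]; linarith [hx.1 j]

lemma reflect_preimage_region {m : ℕ} (j : Fin (m + 1)) {ε : ℝ} :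
    reflect j ⁻¹' (simplexInt (m + 1) ∩ {x | ε ≤ fullVec x j.castSucc})
      = simplexInt (m + 1) ∩ {x | ε ≤ fullVec x (Fin.last (m + 1))} := by
  ext x
  simp only [Set.mem_preimage, Set.mem_inter_iff, Set.mem_setOf_eq]
  constructor
  · rintro ⟨h1, h2⟩
    have hx : x ∈ simplexInt (m + 1) := by
      have := reflect_mem_simplexInt j h1
      rwa [reflect_involutive j x] at this
    refine ⟨hx, ?_⟩
    rw [fullVec_reflect, Equiv.swap_apply_left] at h2
    exact h2
  · rintro ⟨h1, h2⟩
    refine ⟨reflect_mem_simplexInt j h1, ?_⟩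
    rw [fullVec_reflect, Equiv.swap_apply_left]
    exact h2

lemma integrableOn_prod_rpow_castSucc (η : Fin (n + 1) → ℝ) (hη : ∀ i, -1 < η i)
    (j : Fin n) {ε : ℝ} (hε : 0 < ε) :
    IntegrableOn (fun x : Fin n → ℝ => ∏ k, fullVec x k ^ η k)
      (simplexInt n ∩ {x | ε ≤ fullVec x j.castSucc}) := by
  cases n with
  | zero => exact j.elim0
  | succ m =>
    rw [← (measurePreserving_reflect j).integrableOn_comp_preimage
      (reflectEquiv j).measurableEmbedding]
    rw [reflect_preimage_region]
    have hfun : ((fun x : Fin (m + 1) → ℝ => ∏ k, fullVec x k ^ η k) ∘ reflect j)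
        = fun x : Fin (m + 1) → ℝ =>
          ∏ k, fullVec x k ^ (η (Equiv.swap j.castSucc (Fin.last (m + 1)) k)) := by
      funext x
      simp only [Function.comp_apply]
      have h1 : ∀ k, fullVec (reflect j x) k ^ η k
          = (fun k => fullVec x k ^ η (Equiv.swap j.castSucc (Fin.last (m + 1)) k))
            (Equiv.swap j.castSucc (Fin.last (m + 1)) k) := by
        intro k
        simp only [fullVec_reflect, Equiv.swap_apply_self]
      rw [Finset.prod_congr rfl fun k _ => h1 k]
      exact Equiv.prod_comp (Equiv.swap j.castSucc (Fin.last (m + 1)))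
        (fun k => fullVec x k ^ η (Equiv.swap j.castSucc (Fin.last (m + 1)) k))
    rw [hfun]
    exact integrableOn_prod_rpow_last _ (fun i => hη _) hε

lemma integrableOn_prod_rpow (η : Fin (n + 1) → ℝ) (hη : ∀ i, -1 < η i) :
    IntegrableOn (fun x : Fin n → ℝ => ∏ k, fullVec x k ^ η k) (simplexInt n) := by
  set ε : ℝ := 1 / (n + 1) with hεdef
  have hε : 0 < ε := by positivity
  have hcover : simplexInt n ⊆ ⋃ k : Fin (n + 1),
      (simplexInt n ∩ {x | ε ≤ fullVec x k}) := by
    intro x hx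
    by_contra h
    simp only [Set.mem_iUnion, Set.mem_inter_iff, Set.mem_setOf_eq, not_exists,
      not_and, not_le] at h
    have hlt : ∀ k, fullVec x k < ε := fun k => h k hx
    have habs : (1:ℝ) < 1 := by
      calc (1:ℝ) = ∑ k, fullVec x k := (sum_fullVec x).symm
        _ < ∑ _k : Fin (n + 1), ε :=
            Finset.sum_lt_sum_of_nonempty Finset.univ_nonempty fun k _ => hlt k
        _ = (n + 1) * ε := by
            rw [Finset.sum_const, Finset.card_univ, Fintype.card_fin, nsmul_eq_mul]
            push_cast
            ring
        _ = 1 := by rw [hεdef]; field_simp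
    exact absurd habs (lt_irrefl _)
  refine IntegrableOn.mono_set ?_ hcover
  refine integrableOn_finite_iUnion.mpr fun k => ?_
  induction k using Fin.lastCases with
  | last => exact integrableOn_prod_rpow_last η hη hε
  | cast j => exact integrableOn_prod_rpow_castSucc η hη j hε

end Aux

set_option maxHeartbeats 1000000

/-- Weighted integrability of the squared profiled score against the density bound
`∏_k x_k^{η_k}` in the `a`-`0` (gamma-type) model, for `a > 0`, `η ≻ -1` and
`α > max{0, 1-η_j, 1-η_m}`. -/
theorem weighted_score_square_integrable_b_zero (n : ℕ) (hn : 1 ≤ n)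
    (K : Matrix (Fin (n + 1)) (Fin (n + 1)) ℝ) (a : ℝ) (ha : 0 < a)
    (η : Fin (n + 1) → ℝ) (hη : ∀ i, -1 < η i)
    (j : Fin n) (α : ℝ)
    (hα : max 0 (max (1 - η j.castSucc) (1 - η (Fin.last n))) < α) :
    IntegrableOn (fun x : Fin n → ℝ =>
      (∏ k, fullVec x k ^ η k) *
      min (fullVec x j.castSucc) (fullVec x (Fin.last n)) ^ α *
      (-(∑ i, K i j.castSucc * fullVec x i ^ a) * fullVec x j.castSucc ^ (a - 1)
        + (∑ i, K i (Fin.last n) * fullVec x i ^ a) * fullVec x (Fin.last n) ^ (a - 1)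
        + η j.castSucc / fullVec x j.castSucc
        - η (Fin.last n) / fullVec x (Fin.last n)) ^ 2) (simplexInt n) := by
  classical
  have hα0 : (0:ℝ) < α := lt_of_le_of_lt (le_max_left _ _) hα
  have hαj : 1 - η j.castSucc < α :=
    lt_of_le_of_lt ((le_max_left _ _).trans (le_max_right _ _)) hα
  have hαm : 1 - η (Fin.last n) < α :=
    lt_of_le_of_lt ((le_max_right _ _).trans (le_max_right _ _)) hα
  set η₁ := Function.update η j.castSucc (η j.castSucc + (α - 2)) with hη₁def
  set η₂ := Function.update η (Fin.last n) (η (Fin.last n) + (α - 2)) with hη₂def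
  have hη₁ : ∀ i, -1 < η₁ i := by
    intro i
    rcases eq_or_ne i j.castSucc with rfl | hi
    · rw [hη₁def, Function.update_self]; linarith
    · rw [hη₁def, Function.update_of_ne hi]; exact hη i
  have hη₂ : ∀ i, -1 < η₂ i := by
    intro i
    rcases eq_or_ne i (Fin.last n) with rfl | hi
    · rw [hη₂def, Function.update_self]; linarith
    · rw [hη₂def, Function.update_of_ne hi]; exact hη i
  set Kj : ℝ := ∑ i, |K i j.castSucc| with hKjdef
  set Km : ℝ := ∑ i, |K i (Fin.last n)| with hKmdef
  set ej : ℝ := |η j.castSucc| with hejdef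
  set em : ℝ := |η (Fin.last n)| with hemdef
  have hKj0 : 0 ≤ Kj := Finset.sum_nonneg fun i _ => abs_nonneg _
  have hKm0 : 0 ≤ Km := Finset.sum_nonneg fun i _ => abs_nonneg _
  have hej0 : 0 ≤ ej := abs_nonneg _
  have hem0 : 0 ≤ em := abs_nonneg _
  set c : ℝ := Kj + ej + (Km + em) with hcdef
  have hc0 : 0 ≤ c := by
    rw [hcdef]
    have := add_nonneg hKj0 hej0
    have := add_nonneg hKm0 hem0
    linarith
  have hg : IntegrableOn (fun x : Fin n → ℝ =>
      2 * c ^ 2 * ((∏ k, fullVec x k ^ η₁ k) + (∏ k, fullVec x k ^ η₂ k)))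
      (simplexInt n) :=
    ((integrableOn_prod_rpow η₁ hη₁).add (integrableOn_prod_rpow η₂ hη₂)).const_mul _
  refine Integrable.mono' hg ?_ ?_
  · refine Measurable.aestronglyMeasurable ?_
    refine Measurable.mul (Measurable.mul ?_ ?_) ?_
    · exact Finset.measurable_prod _ fun k _ =>
        (measurable_fullVec k).pow measurable_const
    · exact ((measurable_fullVec j.castSucc).min
        (measurable_fullVec (Fin.last n))).pow measurable_const
    · refine Measurable.pow ?_ measurable_const
      refine Measurable.sub (Measurable.add (Measurable.add ?_ ?_) ?_) ?_
      · exact (Finset.measurable_sum _ fun i _ =>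
          measurable_const.mul ((measurable_fullVec i).pow measurable_const)).neg.mul
          ((measurable_fullVec j.castSucc).pow measurable_const)
      · exact (Finset.measurable_sum _ fun i _ =>
          measurable_const.mul ((measurable_fullVec i).pow measurable_const)).mul
          ((measurable_fullVec (Fin.last n)).pow measurable_const)
      · exact measurable_const.div (measurable_fullVec j.castSucc)
      · exact measurable_const.div (measurable_fullVec (Fin.last n))
  · rw [ae_restrict_iff' measurableSet_simplexInt]
    refine MeasureTheory.ae_of_all _ fun x hx => ?_
    set xj := fullVec x j.castSucc with hxjdef
    set xm := fullVec x (Fin.last n) with hxmdef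
    have hxj : 0 < xj := fullVec_pos hx _
    have hxm : 0 < xm := fullVec_pos hx _
    have hxj1 : xj ≤ 1 := fullVec_le_one hx _
    have hxm1 : xm ≤ 1 := fullVec_le_one hx _
    have hP : (0:ℝ) ≤ ∏ k, fullVec x k ^ η k :=
      Finset.prod_nonneg fun k _ => (Real.rpow_pos_of_pos (fullVec_pos hx k) _).le
    have hmin : 0 < min xj xm := lt_min hxj hxm
    have hminα : (0:ℝ) ≤ min xj xm ^ α := (Real.rpow_pos_of_pos hmin α).le
    set A := ∑ i, K i j.castSucc * fullVec x i ^ a with hAdef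
    set B := ∑ i, K i (Fin.last n) * fullVec x i ^ a with hBdef
    set s := -A * xj ^ (a - 1) + B * xm ^ (a - 1)
      + η j.castSucc / xj - η (Fin.last n) / xm with hsdef
    have habs_pow : ∀ i : Fin (n + 1), |fullVec x i ^ a| ≤ 1 := by
      intro i
      rw [abs_of_nonneg (Real.rpow_nonneg (fullVec_pos hx i).le a)]
      exact Real.rpow_le_one (fullVec_pos hx i).le (fullVec_le_one hx i) ha.le
    have hA : |A| ≤ Kj := by
      rw [hKjdef]
      refine (Finset.abs_sum_le_sum_abs _ _).trans (Finset.sum_le_sum fun i _ => ?_)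
      rw [abs_mul]
      calc |K i j.castSucc| * |fullVec x i ^ a| ≤ |K i j.castSucc| * 1 :=
            mul_le_mul_of_nonneg_left (habs_pow i) (abs_nonneg _)
        _ = |K i j.castSucc| := mul_one _
    have hB : |B| ≤ Km := by
      rw [hKmdef]
      refine (Finset.abs_sum_le_sum_abs _ _).trans (Finset.sum_le_sum fun i _ => ?_)
      rw [abs_mul]
      calc |K i (Fin.last n)| * |fullVec x i ^ a| ≤ |K i (Fin.last n)| * 1 :=
            mul_le_mul_of_nonneg_left (habs_pow i) (abs_nonneg _)
        _ = |K i (Fin.last n)| := mul_one _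
    have hxja : xj ^ (a - 1) ≤ xj⁻¹ := by
      rw [← Real.rpow_neg_one xj]
      exact Real.rpow_le_rpow_of_exponent_ge hxj hxj1 (by linarith)
    have hxma : xm ^ (a - 1) ≤ xm⁻¹ := by
      rw [← Real.rpow_neg_one xm]
      exact Real.rpow_le_rpow_of_exponent_ge hxm hxm1 (by linarith)
    have hxjinv : (0:ℝ) ≤ xj⁻¹ := (inv_pos.mpr hxj).le
    have hxminv : (0:ℝ) ≤ xm⁻¹ := (inv_pos.mpr hxm).le
    have hxjann : (0:ℝ) ≤ xj ^ (a - 1) := Real.rpow_nonneg hxj.le _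
    have hxmann : (0:ℝ) ≤ xm ^ (a - 1) := Real.rpow_nonneg hxm.le _
    have hs : |s| ≤ c * (xj⁻¹ + xm⁻¹) := by
      have h1 : |s| ≤ |A| * xj ^ (a - 1) + |B| * xm ^ (a - 1)
          + ej * xj⁻¹ + em * xm⁻¹ := by
        rw [hsdef]
        have e1 : |(-A) * xj ^ (a - 1)| = |A| * xj ^ (a - 1) := by
          rw [abs_mul, abs_neg, abs_of_nonneg hxjann]
        have e2 : |B * xm ^ (a - 1)| = |B| * xm ^ (a - 1) := by
          rw [abs_mul, abs_of_nonneg hxmann]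
        have e3 : |η j.castSucc / xj| = ej * xj⁻¹ := by
          rw [div_eq_mul_inv, abs_mul, abs_of_nonneg hxjinv, hejdef]
        have e4 : |η (Fin.last n) / xm| = em * xm⁻¹ := by
          rw [div_eq_mul_inv, abs_mul, abs_of_nonneg hxminv, hemdef]
        calc |(-A) * xj ^ (a - 1) + B * xm ^ (a - 1)
              + η j.castSucc / xj - η (Fin.last n) / xm|
            ≤ |(-A) * xj ^ (a - 1) + B * xm ^ (a - 1) + η j.castSucc / xj|
              + |η (Fin.last n) / xm| := abs_sub _ _
          _ ≤ |(-A) * xj ^ (a - 1) + B * xm ^ (a - 1)| + |η j.castSucc / xj|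
              + |η (Fin.last n) / xm| := by
              have := abs_add_le ((-A) * xj ^ (a - 1) + B * xm ^ (a - 1))
                (η j.castSucc / xj)
              linarith
          _ ≤ |(-A) * xj ^ (a - 1)| + |B * xm ^ (a - 1)| + |η j.castSucc / xj|
              + |η (Fin.last n) / xm| := by
              have := abs_add_le ((-A) * xj ^ (a - 1)) (B * xm ^ (a - 1))
              linarith
          _ = |A| * xj ^ (a - 1) + |B| * xm ^ (a - 1)
              + ej * xj⁻¹ + em * xm⁻¹ := by
              rw [e1, e2, e3, e4]
      have h2 : |A| * xj ^ (a - 1) ≤ Kj * xj⁻¹ := mul_le_mul hA hxja hxjann hKj0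
      have h3 : |B| * xm ^ (a - 1) ≤ Km * xm⁻¹ := mul_le_mul hB hxma hxmann hKm0
      have hexp : c * (xj⁻¹ + xm⁻¹)
          = Kj * xj⁻¹ + ej * xj⁻¹ + Km * xm⁻¹ + em * xm⁻¹
            + (Kj * xm⁻¹ + ej * xm⁻¹ + Km * xj⁻¹ + em * xj⁻¹) := by
        rw [hcdef]; ring
      have p1 := mul_nonneg hKj0 hxminv
      have p2 := mul_nonneg hKm0 hxjinv
      have p3 := mul_nonneg hej0 hxminv
      have p4 := mul_nonneg hem0 hxjinv
      linarith only [h1, h2, h3, hexp, p1, p2, p3, p4]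
    have hs2 : s ^ 2 ≤ 2 * c ^ 2 * ((xj⁻¹) ^ 2 + (xm⁻¹) ^ 2) := by
      have h1 : s ^ 2 ≤ (c * (xj⁻¹ + xm⁻¹)) ^ 2 := by
        rw [← sq_abs s]
        exact pow_le_pow_left₀ (abs_nonneg _) hs 2
      have h3 : (xj⁻¹ + xm⁻¹) ^ 2 ≤ 2 * ((xj⁻¹) ^ 2 + (xm⁻¹) ^ 2) := by
        have hkey : 2 * ((xj⁻¹) ^ 2 + (xm⁻¹) ^ 2) - (xj⁻¹ + xm⁻¹) ^ 2
            = (xj⁻¹ - xm⁻¹) ^ 2 := by ring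
        linarith only [sq_nonneg (xj⁻¹ - xm⁻¹), hkey]
      have h4 : (c * (xj⁻¹ + xm⁻¹)) ^ 2 ≤ 2 * c ^ 2 * ((xj⁻¹) ^ 2 + (xm⁻¹) ^ 2) := by
        calc (c * (xj⁻¹ + xm⁻¹)) ^ 2 = c ^ 2 * (xj⁻¹ + xm⁻¹) ^ 2 := by ring
          _ ≤ c ^ 2 * (2 * ((xj⁻¹) ^ 2 + (xm⁻¹) ^ 2)) :=
              mul_le_mul_of_nonneg_left h3 (sq_nonneg c)
          _ = 2 * c ^ 2 * ((xj⁻¹) ^ 2 + (xm⁻¹) ^ 2) := by ring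
      linarith only [h1, h4]
    have hinvsq : ∀ y : ℝ, 0 < y → (y⁻¹) ^ 2 = y ^ (-2 : ℝ) := by
      intro y hy
      rw [← Real.rpow_neg_one y, ← Real.rpow_natCast (y ^ (-1:ℝ)) 2,
        ← Real.rpow_mul hy.le]
      norm_num
    have hmj : min xj xm ^ α * (xj⁻¹) ^ 2 ≤ xj ^ (α - 2) := by
      have h1 : min xj xm ^ α ≤ xj ^ α :=
        Real.rpow_le_rpow hmin.le (min_le_left _ _) hα0.le
      rw [hinvsq xj hxj]
      calc min xj xm ^ α * xj ^ (-2:ℝ) ≤ xj ^ α * xj ^ (-2:ℝ) :=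
            mul_le_mul_of_nonneg_right h1 (Real.rpow_nonneg hxj.le _)
        _ = xj ^ (α - 2) := by
            rw [← Real.rpow_add hxj, show α + -2 = α - 2 by ring]
    have hmm : min xj xm ^ α * (xm⁻¹) ^ 2 ≤ xm ^ (α - 2) := by
      have h1 : min xj xm ^ α ≤ xm ^ α :=
        Real.rpow_le_rpow hmin.le (min_le_right _ _) hα0.le
      rw [hinvsq xm hxm]
      calc min xj xm ^ α * xm ^ (-2:ℝ) ≤ xm ^ α * xm ^ (-2:ℝ) :=
            mul_le_mul_of_nonneg_right h1 (Real.rpow_nonneg hxm.le _)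
        _ = xm ^ (α - 2) := by
            rw [← Real.rpow_add hxm, show α + -2 = α - 2 by ring]
    have hprod1 : (∏ k, fullVec x k ^ η k) * xj ^ (α - 2) = ∏ k, fullVec x k ^ η₁ k := by
      rw [hη₁def, prod_rpow_update (fullVec x) (fullVec_pos hx) η j.castSucc (α - 2)]
    have hprod2 : (∏ k, fullVec x k ^ η k) * xm ^ (α - 2) = ∏ k, fullVec x k ^ η₂ k := by
      rw [hη₂def, prod_rpow_update (fullVec x) (fullVec_pos hx) η (Fin.last n) (α - 2)]
    have hnn : (0:ℝ) ≤ (∏ k, fullVec x k ^ η k) * min xj xm ^ α * s ^ 2 :=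
      mul_nonneg (mul_nonneg hP hminα) (sq_nonneg _)
    rw [Real.norm_eq_abs, abs_of_nonneg hnn]
    calc (∏ k, fullVec x k ^ η k) * min xj xm ^ α * s ^ 2
        ≤ (∏ k, fullVec x k ^ η k) * min xj xm ^ α
            * (2 * c ^ 2 * ((xj⁻¹) ^ 2 + (xm⁻¹) ^ 2)) :=
          mul_le_mul_of_nonneg_left hs2 (mul_nonneg hP hminα)
      _ = 2 * c ^ 2 * ((∏ k, fullVec x k ^ η k) * (min xj xm ^ α * (xj⁻¹) ^ 2)
            + (∏ k, fullVec x k ^ η k) * (min xj xm ^ α * (xm⁻¹) ^ 2)) := by ring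
      _ ≤ 2 * c ^ 2 * ((∏ k, fullVec x k ^ η k) * xj ^ (α - 2)
            + (∏ k, fullVec x k ^ η k) * xm ^ (α - 2)) := by
          have e1 := mul_le_mul_of_nonneg_left hmj hP
          have e2 := mul_le_mul_of_nonneg_left hmm hP
          have h2c : (0:ℝ) ≤ 2 * c ^ 2 := by positivity
          exact mul_le_mul_of_nonneg_left (add_le_add e1 e2) h2c
      _ = 2 * c ^ 2 * ((∏ k, fullVec x k ^ η₁ k) + (∏ k, fullVec x k ^ η₂ k)) := by
          rw [hprod1, hprod2]
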